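/- arXiv:2604.10680 — 2 statements merged into one kernel-verified Lean document; each statement's English description precedes it below -/
import Mathlib

section
/- Fix an initial state x ∈ ℝ^n, a disturbance bound μ₀ ≥ 0, and a horizon N. Then the effort metric under the linear closed-loop controller satisfies: inf{ ε ≥ 0 : there exist α₁ ∈ ℝ^{m×n}, α₂ ∈ ℝ^m such that for every disturbance sequence d(0), …, d(N−1) with ‖d(i)‖∞ ≤ μ₀, the closed-loop trajectory x(0) = x, x(k+1) = A_k x(k) + B_k (α₁ x(k) + α₂) + d(k) satisfies G_k x(k) ≤ H_k for all k = 0, …, N and ‖α₁ x(k) + α₂‖∞ ≤ ε for all k = 0, …, N−1 } = inf{ ε ≥ 0 : there exist α₁ ∈ ℝ^{m×n}, α₂ ∈ ℝ^m and a nonnegative matrix P ∈ ℝ^{((N+1)q + 2mN) × 2n(N+1)} with P A_b = μ₀ E^{cl}(α₁) and P B_b ≤ F^{cl}(x, α₁, α₂, ε) }. -/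
open Matrix Finset

noncomputable section

/-- Ordered product `M (k-1) * M (k-2) * ⋯ * M i` (empty product = identity when `k ≤ i`). -/
def mprod {n : ℕ} (M : ℕ → Matrix (Fin n) (Fin n) ℝ) (i k : ℕ) :
    Matrix (Fin n) (Fin n) ℝ :=
  (((List.range' i (k - i)).reverse).map M).prod

def Abar {n m : ℕ} (A : ℕ → Matrix (Fin n) (Fin n) ℝ) (B : ℕ → Matrix (Fin n) (Fin m) ℝ)
    (α₁ : Matrix (Fin m) (Fin n) ℝ) (j : ℕ) : Matrix (Fin n) (Fin n) ℝ :=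
  A j + B j * α₁

def trajCL {n m : ℕ} (A : ℕ → Matrix (Fin n) (Fin n) ℝ) (B : ℕ → Matrix (Fin n) (Fin m) ℝ)
    (α₁ : Matrix (Fin m) (Fin n) ℝ) (α₂ : Fin m → ℝ) (d : ℕ → Fin n → ℝ)
    (x0 : Fin n → ℝ) : ℕ → Fin n → ℝ
  | 0 => x0
  | k + 1 =>
      (A k).mulVec (trajCL A B α₁ α₂ d x0 k)
        + (B k).mulVec (α₁.mulVec (trajCL A B α₁ α₂ d x0 k) + α₂) + d k

def Eblk {n : ℕ} (N : ℕ) (M : ℕ → Matrix (Fin n) (Fin n) ℝ) (k : ℕ) :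
    Matrix (Fin n) (Fin (N + 1) × Fin n) ℝ :=
  Matrix.of fun r jc =>
    if 1 ≤ (jc.1 : ℕ) ∧ (jc.1 : ℕ) ≤ k then mprod M (jc.1 : ℕ) k r jc.2 else 0

def Fblk {n m : ℕ} (A : ℕ → Matrix (Fin n) (Fin n) ℝ) (B : ℕ → Matrix (Fin n) (Fin m) ℝ)
    (α₁ : Matrix (Fin m) (Fin n) ℝ) (α₂ : Fin m → ℝ) (x : Fin n → ℝ) (k : ℕ) : Fin n → ℝ :=
  (mprod (Abar A B α₁) 0 k).mulVec x
    + ∑ i ∈ Finset.range k, (mprod (Abar A B α₁) (i + 1) k * B i).mulVec α₂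

def Ex {n m q : ℕ} (N : ℕ) (A : ℕ → Matrix (Fin n) (Fin n) ℝ)
    (B : ℕ → Matrix (Fin n) (Fin m) ℝ) (G : ℕ → Matrix (Fin q) (Fin n) ℝ)
    (α₁ : Matrix (Fin m) (Fin n) ℝ) :
    Matrix (Fin (N + 1) × Fin q) (Fin (N + 1) × Fin n) ℝ :=
  Matrix.of fun kr jc => (G (kr.1 : ℕ) * Eblk N (Abar A B α₁) (kr.1 : ℕ)) kr.2 jc

def Fx {n m q : ℕ} (N : ℕ) (A : ℕ → Matrix (Fin n) (Fin n) ℝ)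
    (B : ℕ → Matrix (Fin n) (Fin m) ℝ) (G : ℕ → Matrix (Fin q) (Fin n) ℝ)
    (H : ℕ → Fin q → ℝ) (α₁ : Matrix (Fin m) (Fin n) ℝ) (α₂ : Fin m → ℝ)
    (x : Fin n → ℝ) : Fin (N + 1) × Fin q → ℝ :=
  fun kr => H (kr.1 : ℕ) kr.2 - (G (kr.1 : ℕ)).mulVec (Fblk A B α₁ α₂ x (kr.1 : ℕ)) kr.2

def Au (m : ℕ) : Matrix (Fin m ⊕ Fin m) (Fin m) ℝ := Matrix.fromRows 1 (-1)

def Sk {n m : ℕ} (A : ℕ → Matrix (Fin n) (Fin n) ℝ) (B : ℕ → Matrix (Fin n) (Fin m) ℝ)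
    (α₁ : Matrix (Fin m) (Fin n) ℝ) (α₂ : Fin m → ℝ) (x : Fin n → ℝ) (k : ℕ) : Fin m → ℝ :=
  α₁.mulVec (Fblk A B α₁ α₂ x k) + α₂

def Ecl {n m q : ℕ} (N : ℕ) (A : ℕ → Matrix (Fin n) (Fin n) ℝ)
    (B : ℕ → Matrix (Fin n) (Fin m) ℝ) (G : ℕ → Matrix (Fin q) (Fin n) ℝ)
    (α₁ : Matrix (Fin m) (Fin n) ℝ) :
    Matrix ((Fin (N + 1) × Fin q) ⊕ (Fin N × (Fin m ⊕ Fin m))) (Fin (N + 1) × Fin n) ℝ :=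
  Matrix.fromRows (Ex N A B G α₁)
    (Matrix.of fun kr jc => (Au m * α₁ * Eblk N (Abar A B α₁) (kr.1 : ℕ)) kr.2 jc)

def Fcl {n m q : ℕ} (N : ℕ) (A : ℕ → Matrix (Fin n) (Fin n) ℝ)
    (B : ℕ → Matrix (Fin n) (Fin m) ℝ) (G : ℕ → Matrix (Fin q) (Fin n) ℝ)
    (H : ℕ → Fin q → ℝ) (α₁ : Matrix (Fin m) (Fin n) ℝ) (α₂ : Fin m → ℝ)
    (x : Fin n → ℝ) (ε : ℝ) : (Fin (N + 1) × Fin q) ⊕ (Fin N × (Fin m ⊕ Fin m)) → ℝ :=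
  Sum.elim (Fx N A B G H α₁ α₂ x)
    (fun kr => ε - (Au m).mulVec (Sk A B α₁ α₂ x (kr.1 : ℕ)) kr.2)

def AbM (N n : ℕ) :
    Matrix ((Fin (N + 1) × Fin n) ⊕ (Fin (N + 1) × Fin n)) (Fin (N + 1) × Fin n) ℝ :=
  Matrix.fromRows 1 (-1)

def BbV (N n : ℕ) : (Fin (N + 1) × Fin n) ⊕ (Fin (N + 1) × Fin n) → ℝ := fun _ => 1

def trajOL {n m : ℕ} (A : ℕ → Matrix (Fin n) (Fin n) ℝ) (B : ℕ → Matrix (Fin n) (Fin m) ℝ)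
    (u : ℕ → Fin m → ℝ) (d : ℕ → Fin n → ℝ) (x0 : Fin n → ℝ) : ℕ → Fin n → ℝ
  | 0 => x0
  | k + 1 => (A k).mulVec (trajOL A B u d x0 k) + (B k).mulVec (u k) + d k

def Eol {n q : ℕ} (N : ℕ) (A : ℕ → Matrix (Fin n) (Fin n) ℝ)
    (G : ℕ → Matrix (Fin q) (Fin n) ℝ) :
    Matrix (Fin (N + 1) × Fin q) (Fin (N + 1) × Fin n) ℝ :=
  Matrix.of fun kr jc => (G (kr.1 : ℕ) * Eblk N A (kr.1 : ℕ)) kr.2 jc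

def Fol {n m q : ℕ} (N : ℕ) (A : ℕ → Matrix (Fin n) (Fin n) ℝ)
    (B : ℕ → Matrix (Fin n) (Fin m) ℝ) (G : ℕ → Matrix (Fin q) (Fin n) ℝ)
    (H : ℕ → Fin q → ℝ) (x : Fin n → ℝ) (ut : ℕ → Fin m → ℝ) (ε : ℝ) :
    Fin (N + 1) × Fin q → ℝ :=
  fun kr => H (kr.1 : ℕ) kr.2
    - (G (kr.1 : ℕ)).mulVec ((mprod A 0 (kr.1 : ℕ)).mulVec x) kr.2
    - ε * (G (kr.1 : ℕ)).mulVec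
        (∑ i ∈ Finset.range (kr.1 : ℕ), (mprod A (i + 1) (kr.1 : ℕ) * B i).mulVec (ut i)) kr.2

-- ===== Auxiliary lemmas =====

lemma mprod_self' {n : ℕ} (M : ℕ → Matrix (Fin n) (Fin n) ℝ) (k : ℕ) : mprod M k k = 1 := by
  simp [mprod]

lemma mprod_succ {n : ℕ} (M : ℕ → Matrix (Fin n) (Fin n) ℝ) {i k : ℕ} (h : i ≤ k) :
    mprod M i (k + 1) = M k * mprod M i k := by
  have h1 : k + 1 - i = (k - i) + 1 := by omega
  have h2 : i + 1 * (k - i) = k := by omega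
  rw [mprod, h1, List.range'_concat, h2, List.reverse_append, List.map_append, List.prod_append]
  simp [mprod]

lemma mul_fromRows_one_neg_one {ι κ : Type*} [Fintype ι] [Fintype κ] [DecidableEq κ]
    (P : Matrix ι (κ ⊕ κ) ℝ) (i : ι) (j : κ) :
    ((P * (Matrix.fromRows 1 (-1) : Matrix (κ ⊕ κ) κ ℝ) : Matrix ι κ ℝ)) i j
      = P i (Sum.inl j) - P i (Sum.inr j) := by
  simp [Matrix.mul_apply, Fintype.sum_sum_type, Matrix.one_apply, mul_ite,
    Finset.sum_ite_eq', sub_eq_add_neg]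

lemma mulVec_ones {ι κ : Type*} [Fintype ι] [Fintype κ]
    (P : Matrix ι (κ ⊕ κ) ℝ) (i : ι) :
    P.mulVec (fun _ => 1) i = ∑ j : κ, P i (Sum.inl j) + ∑ j : κ, P i (Sum.inr j) := by
  simp [Matrix.mulVec, dotProduct, Fintype.sum_sum_type]

lemma farkas_box {ι κ : Type*} [Fintype ι] [Fintype κ] [DecidableEq κ] {μ₀ : ℝ} (hμ₀ : 0 ≤ μ₀)
    (E : Matrix ι κ ℝ) (F : ι → ℝ) :
    (∀ w : κ → ℝ, (∀ j, |w j| ≤ μ₀) → E.mulVec w ≤ F) ↔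
    ∃ P : Matrix ι (κ ⊕ κ) ℝ, (∀ i j, 0 ≤ P i j) ∧
      P * Matrix.fromRows 1 (-1) = μ₀ • E ∧ P.mulVec (fun _ => 1) ≤ F := by
  constructor
  · intro h
    refine ⟨Matrix.of fun i s => Sum.elim (fun j => μ₀ * max (E i j) 0)
      (fun j => μ₀ * max (-(E i j)) 0) s, ?_, ?_, ?_⟩
    · rintro i (j | j) <;> exact mul_nonneg hμ₀ (le_max_right _ _)
    · ext i j
      erw [mul_fromRows_one_neg_one]
      simp only [Matrix.of_apply, Sum.elim_inl, Sum.elim_inr, Matrix.smul_apply, smul_eq_mul]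
      rw [← mul_sub, max_zero_sub_max_neg_zero_eq_self]
    · intro i
      have key := h (fun j => if 0 ≤ E i j then μ₀ else -μ₀) (by
        intro j; show |(if 0 ≤ E i j then μ₀ else -μ₀)| ≤ μ₀; split_ifs <;>
          simp [abs_of_nonneg hμ₀, abs_of_nonpos (neg_nonpos.mpr hμ₀), hμ₀])
      have hEi : E.mulVec (fun j => if 0 ≤ E i j then μ₀ else -μ₀) i
          = ∑ j : κ, μ₀ * |E i j| := by
        simp only [Matrix.mulVec, dotProduct]
        refine Finset.sum_congr rfl fun j _ => ?_
        split_ifs with hj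
        · rw [abs_of_nonneg hj]; ring
        · rw [abs_of_neg (lt_of_not_ge hj)]; ring
      rw [mulVec_ones]
      have habs : (∑ j : κ, μ₀ * max (E i j) 0) + ∑ j : κ, μ₀ * max (-(E i j)) 0
          = ∑ j : κ, μ₀ * |E i j| := by
        rw [← Finset.sum_add_distrib]
        refine Finset.sum_congr rfl fun j _ => ?_
        rw [← mul_add]
        congr 1
        rcases le_total (E i j) 0 with hj | hj
        · rw [max_eq_right hj, max_eq_left (by linarith), abs_of_nonpos hj]; ring
        · rw [max_eq_left hj, max_eq_right (by linarith), abs_of_nonneg hj]; ring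
      simp only [Matrix.of_apply, Sum.elim_inl, Sum.elim_inr]
      rw [habs]
      calc ∑ j : κ, μ₀ * |E i j| = _ := hEi.symm
        _ ≤ F i := key i
  · rintro ⟨P, hP, hEq, hLe⟩ w hw i
    have step : ∀ j : κ, E i j * w j ≤ P i (Sum.inl j) + P i (Sum.inr j) := by
      intro j
      have h1 : E i j * w j ≤ |E i j| * μ₀ := by
        calc E i j * w j ≤ |E i j * w j| := le_abs_self _
          _ = |E i j| * |w j| := abs_mul _ _
          _ ≤ |E i j| * μ₀ := mul_le_mul_of_nonneg_left (hw j) (abs_nonneg _)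
      have h2 : |E i j| * μ₀ = |μ₀ * E i j| := by
        rw [abs_mul, abs_of_nonneg hμ₀]; ring
      have h3 : μ₀ * E i j = P i (Sum.inl j) - P i (Sum.inr j) := by
        have hc := congrFun (congrFun hEq i) j
        erw [mul_fromRows_one_neg_one] at hc
        simpa using hc.symm
      calc E i j * w j ≤ |μ₀ * E i j| := h2 ▸ h1
        _ = |P i (Sum.inl j) - P i (Sum.inr j)| := by rw [h3]
        _ ≤ |P i (Sum.inl j)| + |P i (Sum.inr j)| := by
            rw [sub_eq_add_neg]
            exact (abs_add_le _ _).trans (by rw [abs_neg])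
        _ = P i (Sum.inl j) + P i (Sum.inr j) := by
            rw [abs_of_nonneg (hP i _), abs_of_nonneg (hP i _)]
    calc E.mulVec w i = ∑ j : κ, E i j * w j := rfl
      _ ≤ ∑ j : κ, (P i (Sum.inl j) + P i (Sum.inr j)) := Finset.sum_le_sum fun j _ => step j
      _ = P.mulVec (fun _ => 1) i := by rw [mulVec_ones, Finset.sum_add_distrib]
      _ ≤ F i := hLe i

section Traj
variable {n m : ℕ} (A : ℕ → Matrix (Fin n) (Fin n) ℝ) (B : ℕ → Matrix (Fin n) (Fin m) ℝ)
  (α₁ : Matrix (Fin m) (Fin n) ℝ) (α₂ : Fin m → ℝ) (d : ℕ → Fin n → ℝ) (x : Fin n → ℝ)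

lemma mulVec_sum' {k : ℕ} (M : Matrix (Fin n) (Fin n) ℝ) (v : ℕ → Fin n → ℝ) :
    M.mulVec (∑ i ∈ range k, v i) = ∑ i ∈ range k, M.mulVec (v i) := by
  induction k with
  | zero => simp [Matrix.mulVec_zero]
  | succ k ih => rw [Finset.sum_range_succ, Finset.sum_range_succ, Matrix.mulVec_add, ih]

lemma trajCL_formula (k : ℕ) :
    trajCL A B α₁ α₂ d x k = (mprod (Abar A B α₁) 0 k).mulVec x
      + ∑ i ∈ range k, (mprod (Abar A B α₁) (i + 1) k).mulVec ((B i).mulVec α₂ + d i) := by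
  induction k with
  | zero => simp [trajCL, mprod_self']
  | succ k ih =>
      have step : trajCL A B α₁ α₂ d x (k + 1)
          = (Abar A B α₁ k).mulVec (trajCL A B α₁ α₂ d x k)
            + ((B k).mulVec α₂ + d k) := by
        show (A k).mulVec _ + (B k).mulVec _ + d k = _
        rw [Abar, Matrix.add_mulVec, Matrix.mulVec_add, ← Matrix.mulVec_mulVec]
        abel
      rw [step, ih, Matrix.mulVec_add, mulVec_sum', Finset.sum_range_succ,
        Matrix.mulVec_mulVec, ← mprod_succ _ (Nat.zero_le k)]
      have hsum : ∀ i ∈ range k,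
          (Abar A B α₁ k).mulVec ((mprod (Abar A B α₁) (i + 1) k).mulVec
            ((B i).mulVec α₂ + d i))
          = (mprod (Abar A B α₁) (i + 1) (k + 1)).mulVec ((B i).mulVec α₂ + d i) := by
        intro i hi
        rw [Matrix.mulVec_mulVec, ← mprod_succ _ (Finset.mem_range.mp hi)]
      rw [Finset.sum_congr rfl hsum, mprod_self']
      simp only [Matrix.one_mulVec]
      abel

lemma Eblk_mulVec {N : ℕ} (M : ℕ → Matrix (Fin n) (Fin n) ℝ) (k : ℕ)
    (w : Fin (N + 1) × Fin n → ℝ) :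
    (Eblk N M k).mulVec w = ∑ j : Fin (N + 1),
      (if 1 ≤ (j : ℕ) ∧ (j : ℕ) ≤ k then mprod M (j : ℕ) k else 0).mulVec
        (fun c => w (j, c)) := by
  ext r
  simp only [Matrix.mulVec, dotProduct, Eblk, Matrix.of_apply, Finset.sum_apply]
  rw [Fintype.sum_prod_type]
  refine Finset.sum_congr rfl fun j _ => ?_
  split_ifs with h
  · rfl
  · simp

lemma sum_fin_eq_sum_range {N : ℕ} (g : ℕ → Fin n → ℝ) (k : ℕ) (hk : k ≤ N)
    (hg0 : g 0 = 0) (hgk : ∀ j, k < j → g j = 0) :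
    (∑ j : Fin (N + 1), g (j : ℕ)) = ∑ i ∈ range k, g (i + 1) := by
  rw [Fin.sum_univ_eq_sum_range]
  have h1 : ∑ j ∈ range (N + 1), g j = ∑ j ∈ range (k + 1), g j := by
    refine (Finset.sum_subset (Finset.range_subset_range.2 (by omega)) ?_).symm
    intro j hj hj2
    exact hgk j (by simp only [Finset.mem_range] at hj hj2; omega)
  rw [h1, Finset.sum_range_succ', hg0, add_zero]

lemma trajCL_eq_F_add_E {N : ℕ} (k : ℕ) (hk : k ≤ N) (w : Fin (N + 1) × Fin n → ℝ)
    (hw : ∀ j : Fin (N + 1), 1 ≤ (j : ℕ) → (fun c => w (j, c)) = d ((j : ℕ) - 1)) :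
    trajCL A B α₁ α₂ d x k
      = Fblk A B α₁ α₂ x k + (Eblk N (Abar A B α₁) k).mulVec w := by
  rw [trajCL_formula, Fblk, Eblk_mulVec]
  have hE : (∑ j : Fin (N + 1),
      (if 1 ≤ (j : ℕ) ∧ (j : ℕ) ≤ k then mprod (Abar A B α₁) (j : ℕ) k else 0).mulVec
        (fun c => w (j, c)))
      = ∑ i ∈ range k, (mprod (Abar A B α₁) (i + 1) k).mulVec (d i) := by
    have hpt : ∀ j : Fin (N + 1),
        (if 1 ≤ (j : ℕ) ∧ (j : ℕ) ≤ k then mprod (Abar A B α₁) (j : ℕ) k else 0).mulVec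
          (fun c => w (j, c))
        = (fun j' : ℕ => if 1 ≤ j' ∧ j' ≤ k then
            (mprod (Abar A B α₁) j' k).mulVec (d (j' - 1)) else 0) (j : ℕ) := by
      intro j
      dsimp only
      split_ifs with h
      · rw [hw j h.1]
      · simp
    rw [Finset.sum_congr rfl fun j _ => hpt j,
      sum_fin_eq_sum_range (fun j' => if 1 ≤ j' ∧ j' ≤ k then
          mprod (Abar A B α₁) j' k *ᵥ d (j' - 1) else 0) k hk
        (if_neg (by omega)) (fun j hj => if_neg (by omega))]
    refine Finset.sum_congr rfl fun i hi => ?_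
    have hik : i < k := Finset.mem_range.mp hi
    rw [if_pos ⟨by omega, by omega⟩]
    simp
  rw [hE]
  have hsplit : (∑ i ∈ range k, (mprod (Abar A B α₁) (i + 1) k).mulVec
      ((B i).mulVec α₂ + d i))
      = (∑ i ∈ range k, (mprod (Abar A B α₁) (i + 1) k * B i).mulVec α₂)
        + ∑ i ∈ range k, (mprod (Abar A B α₁) (i + 1) k).mulVec (d i) := by
    rw [← Finset.sum_add_distrib]
    refine Finset.sum_congr rfl fun i _ => ?_
    rw [Matrix.mulVec_add, ← Matrix.mulVec_mulVec]
  rw [hsplit]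
  abel

end Traj

section Rows
variable {n m q N : ℕ} (A : ℕ → Matrix (Fin n) (Fin n) ℝ) (B : ℕ → Matrix (Fin n) (Fin m) ℝ)
  (G : ℕ → Matrix (Fin q) (Fin n) ℝ) (H : ℕ → Fin q → ℝ)
  (α₁ : Matrix (Fin m) (Fin n) ℝ) (α₂ : Fin m → ℝ) (x : Fin n → ℝ) {ε : ℝ}

lemma Au_mulVec (v : Fin m → ℝ) : (Au m).mulVec v = Sum.elim v (-v) := by
  rw [Au, Matrix.fromRows_mulVec, Matrix.one_mulVec, Matrix.neg_mulVec, Matrix.one_mulVec]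

lemma norm_le_iff_Au (hε : 0 ≤ ε) (v : Fin m → ℝ) :
    ‖v‖ ≤ ε ↔ ∀ s, (Au m).mulVec v s ≤ ε := by
  rw [pi_norm_le_iff_of_nonneg hε, Au_mulVec]
  constructor
  · intro h s
    rcases s with t | t
    · exact (abs_le.mp (by simpa [Real.norm_eq_abs] using h t)).2
    · have ht := (abs_le.mp (by simpa [Real.norm_eq_abs] using h t)).1
      simp only [Sum.elim_inr, Pi.neg_apply]
      linarith
  · intro h t
    have h1 := h (Sum.inl t)
    have h2 := h (Sum.inr t)
    simp only [Sum.elim_inl, Sum.elim_inr, Pi.neg_apply] at h1 h2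
    rw [Real.norm_eq_abs, abs_le]
    exact ⟨by linarith, h1⟩

lemma key1 (w : Fin (N + 1) × Fin n → ℝ) (k : Fin (N + 1)) (r : Fin q) :
    ((Ecl N A B G α₁).mulVec w (Sum.inl (k, r))
      ≤ Fcl N A B G H α₁ α₂ x ε (Sum.inl (k, r)))
    ↔ (G (k : ℕ)).mulVec (Fblk A B α₁ α₂ x (k : ℕ)
        + (Eblk N (Abar A B α₁) (k : ℕ)).mulVec w) r ≤ H (k : ℕ) r := by
  have hEx : (Ex N A B G α₁).mulVec w (k, r)
      = (G (k : ℕ)).mulVec ((Eblk N (Abar A B α₁) (k : ℕ)).mulVec w) r := by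
    show ((G (k : ℕ) * Eblk N (Abar A B α₁) (k : ℕ)).mulVec w) r = _
    rw [← Matrix.mulVec_mulVec]
  simp only [Ecl, Matrix.fromRows_mulVec, Sum.elim_inl, Fcl, Fx, hEx,
    Matrix.mulVec_add, Pi.add_apply]
  constructor <;> intro hle <;> linarith

lemma key2 (w : Fin (N + 1) × Fin n → ℝ) (k : Fin N) (s : Fin m ⊕ Fin m) :
    ((Ecl N A B G α₁).mulVec w (Sum.inr (k, s))
      ≤ Fcl N A B G H α₁ α₂ x ε (Sum.inr (k, s)))
    ↔ (Au m).mulVec (α₁.mulVec (Fblk A B α₁ α₂ x (k : ℕ)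
        + (Eblk N (Abar A B α₁) (k : ℕ)).mulVec w) + α₂) s ≤ ε := by
  have hrow : (Matrix.of fun (kr : Fin N × (Fin m ⊕ Fin m))
        (jc : Fin (N + 1) × Fin n) =>
        (Au m * α₁ * Eblk N (Abar A B α₁) (kr.1 : ℕ)) kr.2 jc).mulVec w (k, s)
      = (Au m).mulVec (α₁.mulVec ((Eblk N (Abar A B α₁) (k : ℕ)).mulVec w)) s := by
    show ((Au m * α₁ * Eblk N (Abar A B α₁) (k : ℕ)).mulVec w) s = _
    rw [← Matrix.mulVec_mulVec, ← Matrix.mulVec_mulVec]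
  simp only [Ecl, Matrix.fromRows_mulVec, Sum.elim_inr, Fcl, Sk, hrow,
    Matrix.mulVec_add, Matrix.mulVec_add, Pi.add_apply]
  constructor <;> intro hle <;> linarith

lemma rob_iff_box {μ₀ : ℝ} (hμ₀ : 0 ≤ μ₀) (hε : 0 ≤ ε) :
    (∀ d : ℕ → Fin n → ℝ, (∀ i, i < N → ‖d i‖ ≤ μ₀) →
      (∀ k, k ≤ N → (G k).mulVec (trajCL A B α₁ α₂ d x k) ≤ H k) ∧
      (∀ k, k < N → ‖α₁.mulVec (trajCL A B α₁ α₂ d x k) + α₂‖ ≤ ε))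
    ↔ (∀ w : Fin (N + 1) × Fin n → ℝ, (∀ jc, |w jc| ≤ μ₀) →
        (Ecl N A B G α₁).mulVec w ≤ Fcl N A B G H α₁ α₂ x ε) := by
  constructor
  · intro hrob w hw
    set d : ℕ → Fin n → ℝ :=
      fun i c => if h : i + 1 < N + 1 then w (⟨i + 1, h⟩, c) else 0 with hd_def
    have hd : ∀ i, i < N → ‖d i‖ ≤ μ₀ := by
      intro i hi
      rw [pi_norm_le_iff_of_nonneg hμ₀]
      intro c
      rw [Real.norm_eq_abs]
      show |if h : i + 1 < N + 1 then w (⟨i + 1, h⟩, c) else 0| ≤ μ₀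
      rw [dif_pos (by omega)]
      exact hw _
    have hw' : ∀ j : Fin (N + 1), 1 ≤ (j : ℕ) →
        (fun c => w (j, c)) = d ((j : ℕ) - 1) := by
      intro j hj
      funext c
      show w (j, c) = if h : (j : ℕ) - 1 + 1 < N + 1 then w (⟨(j : ℕ) - 1 + 1, h⟩, c) else 0
      rw [dif_pos (by omega : (j : ℕ) - 1 + 1 < N + 1),
        show (⟨(j : ℕ) - 1 + 1, by omega⟩ : Fin (N + 1)) = j from
          Fin.ext (by simp only [Fin.val_mk]; omega)]
    obtain ⟨hG, hu⟩ := hrob d hd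
    intro p
    rcases p with ⟨k, r⟩ | ⟨k, s⟩
    · rw [key1]
      rw [← trajCL_eq_F_add_E A B α₁ α₂ d x (k : ℕ) k.is_le w hw']
      exact hG (k : ℕ) k.is_le r
    · rw [key2]
      rw [← trajCL_eq_F_add_E A B α₁ α₂ d x (k : ℕ)
        (by have := k.isLt; omega : (k : ℕ) ≤ N) w hw']
      exact (norm_le_iff_Au hε _).mp (hu (k : ℕ) k.isLt) s
  · intro hbox d hd
    set w : Fin (N + 1) × Fin n → ℝ :=
      fun jc => if (jc.1 : ℕ) = 0 then 0 else d ((jc.1 : ℕ) - 1) jc.2 with hw_def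
    have hw : ∀ jc, |w jc| ≤ μ₀ := by
      rintro ⟨j, c⟩
      show |if (j : ℕ) = 0 then 0 else d ((j : ℕ) - 1) c| ≤ μ₀
      split_ifs with h0
      · simpa using hμ₀
      · have hjN : (j : ℕ) - 1 < N := by have := j.isLt; omega
        calc |d ((j : ℕ) - 1) c| = ‖d ((j : ℕ) - 1) c‖ := (Real.norm_eq_abs _).symm
          _ ≤ ‖d ((j : ℕ) - 1)‖ := norm_le_pi_norm _ c
          _ ≤ μ₀ := hd _ hjN
    have hw' : ∀ j : Fin (N + 1), 1 ≤ (j : ℕ) →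
        (fun c => w (j, c)) = d ((j : ℕ) - 1) := by
      intro j hj
      funext c
      show (if (j : ℕ) = 0 then 0 else d ((j : ℕ) - 1) c) = d ((j : ℕ) - 1) c
      rw [if_neg (by omega)]
    have hbw := hbox w hw
    constructor
    · intro k hk r
      have hb := hbw (Sum.inl (⟨k, by omega⟩, r))
      rw [key1] at hb
      rw [← trajCL_eq_F_add_E A B α₁ α₂ d x k (by simpa using hk) w hw'] at hb
      simpa using hb
    · intro k hk
      rw [norm_le_iff_Au hε]
      intro s
      have hb := hbw (Sum.inr (⟨k, hk⟩, s))
      rw [key2] at hb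
      rw [← trajCL_eq_F_add_E A B α₁ α₂ d x k (by omega) w hw'] at hb
      simpa using hb

end Rows

/-- Effort metric under the linear closed-loop controller, with disturbance bound `μ₀`:
the infimum of admissible input bounds `ε` in the robust formulation equals the infimum
in the Farkas-certified formulation. -/
theorem effort_closedLoop {n m q N : ℕ}
    (A : ℕ → Matrix (Fin n) (Fin n) ℝ) (B : ℕ → Matrix (Fin n) (Fin m) ℝ)
    (G : ℕ → Matrix (Fin q) (Fin n) ℝ) (H : ℕ → Fin q → ℝ)
    (x : Fin n → ℝ) (μ₀ : ℝ) (hμ₀ : 0 ≤ μ₀) :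
    sInf {ε : ℝ | 0 ≤ ε ∧ ∃ (α₁ : Matrix (Fin m) (Fin n) ℝ) (α₂ : Fin m → ℝ),
        ∀ d : ℕ → Fin n → ℝ, (∀ i, i < N → ‖d i‖ ≤ μ₀) →
          (∀ k, k ≤ N → (G k).mulVec (trajCL A B α₁ α₂ d x k) ≤ H k) ∧
          (∀ k, k < N → ‖α₁.mulVec (trajCL A B α₁ α₂ d x k) + α₂‖ ≤ ε)} =
    sInf {ε : ℝ | 0 ≤ ε ∧ ∃ (α₁ : Matrix (Fin m) (Fin n) ℝ) (α₂ : Fin m → ℝ)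
        (P : Matrix ((Fin (N + 1) × Fin q) ⊕ (Fin N × (Fin m ⊕ Fin m)))
          ((Fin (N + 1) × Fin n) ⊕ (Fin (N + 1) × Fin n)) ℝ),
        (∀ i j, 0 ≤ P i j) ∧
        P * AbM N n = μ₀ • Ecl N A B G α₁ ∧
        P.mulVec (BbV N n) ≤ Fcl N A B G H α₁ α₂ x ε} := by
  
  have hset : {ε : ℝ | 0 ≤ ε ∧ ∃ (α₁ : Matrix (Fin m) (Fin n) ℝ) (α₂ : Fin m → ℝ),
        ∀ d : ℕ → Fin n → ℝ, (∀ i, i < N → ‖d i‖ ≤ μ₀) →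
          (∀ k, k ≤ N → (G k).mulVec (trajCL A B α₁ α₂ d x k) ≤ H k) ∧
          (∀ k, k < N → ‖α₁.mulVec (trajCL A B α₁ α₂ d x k) + α₂‖ ≤ ε)} =
      {ε : ℝ | 0 ≤ ε ∧ ∃ (α₁ : Matrix (Fin m) (Fin n) ℝ) (α₂ : Fin m → ℝ)
        (P : Matrix ((Fin (N + 1) × Fin q) ⊕ (Fin N × (Fin m ⊕ Fin m)))
          ((Fin (N + 1) × Fin n) ⊕ (Fin (N + 1) × Fin n)) ℝ),
        (∀ i j, 0 ≤ P i j) ∧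
        P * AbM N n = μ₀ • Ecl N A B G α₁ ∧
        P.mulVec (BbV N n) ≤ Fcl N A B G H α₁ α₂ x ε} := by
    ext ε
    simp only [Set.mem_setOf_eq]
    refine and_congr_right fun hε => ?_
    refine exists_congr fun α₁ => exists_congr fun α₂ => ?_
    rw [rob_iff_box A B G H α₁ α₂ x hμ₀ hε]
    exact farkas_box hμ₀ (Ecl N A B G α₁) (Fcl N A B G H α₁ α₂ x ε)
  rw [hset]
end
end

section
/- Fix an initial state x ∈ ℝ^n, a disturbance bound μ₀ ≥ 0, and a horizon N. Then the effort metric under open-loop controllers satisfies: inf{ ε ≥ 0 : there exists a sequence u(0), …, u(N−1) ∈ ℝ^m with ‖u(i)‖∞ ≤ ε such that for every disturbance sequence d(0), …, d(N−1) with ‖d(i)‖∞ ≤ μ₀, the trajectory x(0) = x, x(k+1) = A_k x(k) + B_k u(k) + d(k) satisfies G_k x(k) ≤ H_k for all k = 0, …, N } = inf{ ε ≥ 0 : there exist ũ(0), …, ũ(N−1) ∈ ℝ^m with ‖ũ(i)‖∞ ≤ 1 and a nonnegative matrix P ∈ ℝ^{(N+1)q × 2n(N+1)} with P A_b = μ₀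 E^{ol} and P B_b ≤ F^{ol}(x, ũ, ε) }. -/
open Matrix Finset

noncomputable section

section Helpers

lemma mprod_stop {n : ℕ} (M : ℕ → Matrix (Fin n) (Fin n) ℝ) {i k : ℕ} (h : k ≤ i) :
    mprod M i k = 1 := by
  simp [mprod, Nat.sub_eq_zero_of_le h]

lemma mulVec_sum'_s13 {p n : ℕ} (s : Finset ℕ) (A : Matrix (Fin p) (Fin n) ℝ)
    (f : ℕ → Fin n → ℝ) :
    A.mulVec (∑ i ∈ s, f i) = ∑ i ∈ s, A.mulVec (f i) := by
  ext r
  simp only [Matrix.mulVec, dotProduct, Finset.sum_apply, Finset.mul_sum]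
  exact Finset.sum_comm

lemma trajOL_eq {n m : ℕ} (A : ℕ → Matrix (Fin n) (Fin n) ℝ)
    (B : ℕ → Matrix (Fin n) (Fin m) ℝ) (u : ℕ → Fin m → ℝ) (d : ℕ → Fin n → ℝ)
    (x0 : Fin n → ℝ) : ∀ k, trajOL A B u d x0 k =
      (mprod A 0 k).mulVec x0
        + ∑ i ∈ Finset.range k, (mprod A (i + 1) k * B i).mulVec (u i)
        + ∑ i ∈ Finset.range k, (mprod A (i + 1) k).mulVec (d i) := by
  intro k
  induction k with
  | zero => simp [trajOL, mprod_stop]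
  | succ k ih =>
    have hstep : ∀ i, i < k → mprod A (i + 1) (k + 1) = A k * mprod A (i + 1) k := by
      intro i hi; exact mprod_succ A (by omega)
    have h1 : ∑ i ∈ Finset.range (k+1), (mprod A (i + 1) (k+1) * B i).mulVec (u i)
        = (∑ i ∈ Finset.range k, (A k).mulVec ((mprod A (i + 1) k * B i).mulVec (u i)))
          + (B k).mulVec (u k) := by
      rw [Finset.sum_range_succ]
      congr 1
      · refine Finset.sum_congr rfl fun i hi => ?_
        rw [hstep i (Finset.mem_range.mp hi), Matrix.mulVec_mulVec, Matrix.mul_assoc]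
      · rw [mprod_stop A (le_refl (k+1)), Matrix.one_mul]
    have h2 : ∑ i ∈ Finset.range (k+1), (mprod A (i + 1) (k+1)).mulVec (d i)
        = (∑ i ∈ Finset.range k, (A k).mulVec ((mprod A (i + 1) k).mulVec (d i))) + d k := by
      rw [Finset.sum_range_succ]
      congr 1
      · refine Finset.sum_congr rfl fun i hi => ?_
        rw [hstep i (Finset.mem_range.mp hi), Matrix.mulVec_mulVec]
      · rw [mprod_stop A (le_refl (k+1)), Matrix.one_mulVec]
    show (A k).mulVec (trajOL A B u d x0 k) + (B k).mulVec (u k) + d k = _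
    rw [ih, Matrix.mulVec_add, Matrix.mulVec_add, mulVec_sum'_s13, mulVec_sum'_s13, h1, h2,
      Matrix.mulVec_mulVec, ← mprod_succ A (Nat.zero_le k)]
    abel

end Helpers

section Helpers2

open Fin.NatCast

lemma max_sub_max (a : ℝ) : max a 0 - max (-a) 0 = a := by
  rcases le_total a 0 with h | h
  · rw [max_eq_right h, max_eq_left (by linarith)]; ring
  · rw [max_eq_left h, max_eq_right (by linarith)]; ring

lemma max_add_max (a : ℝ) : max a 0 + max (-a) 0 = |a| := by
  rcases le_total a 0 with h | h
  · rw [max_eq_right h, max_eq_left (by linarith), abs_of_nonpos h]; ring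
  · rw [max_eq_left h, max_eq_right (by linarith), abs_of_nonneg h]; ring

lemma Eol_apply {n q : ℕ} (N : ℕ) (A : ℕ → Matrix (Fin n) (Fin n) ℝ)
    (G : ℕ → Matrix (Fin q) (Fin n) ℝ) (k j : Fin (N + 1)) (ρ : Fin q) (c : Fin n) :
    Eol N A G (k, ρ) (j, c)
      = if 1 ≤ (j : ℕ) ∧ (j : ℕ) ≤ (k : ℕ) then (G (k : ℕ) * mprod A (j : ℕ) (k : ℕ)) ρ c
        else 0 := by
  simp only [Eol, Eblk, Matrix.of_apply, Matrix.mul_apply]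
  by_cases h : 1 ≤ (j : ℕ) ∧ (j : ℕ) ≤ (k : ℕ)
  · simp only [if_pos h]
  · simp only [if_neg h, mul_zero, Finset.sum_const_zero]

lemma band_sum {N k : ℕ} (hk : k ≤ N) (f : ℕ → ℝ) (h0 : f 0 = 0)
    (hh : ∀ j, k < j → j ≤ N → f j = 0) :
    ∑ j ∈ Finset.range (N + 1), f j = ∑ i ∈ Finset.range k, f (i + 1) := by
  have hsub : Finset.range (k + 1) ⊆ Finset.range (N + 1) := by
    apply Finset.range_subset_range.mpr; omega
  rw [← Finset.sum_subset hsub (by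
    intro j hj hj2
    simp only [Finset.mem_range] at hj hj2
    exact hh j (by omega) (by omega))]
  rw [Finset.sum_range_succ' f k, h0, add_zero]

lemma pair_sum {n N : ℕ} {k : ℕ} (hk : k ≤ N) (F : Fin (N + 1) × Fin n → ℝ)
    (h0 : ∀ (j : Fin (N + 1)) (c : Fin n), ¬(1 ≤ (j : ℕ) ∧ (j : ℕ) ≤ k) → F (j, c) = 0) :
    ∑ jc : Fin (N + 1) × Fin n, F jc
      = ∑ i ∈ Finset.range k, ∑ c, F ((((i + 1 : ℕ)) : Fin (N + 1)), c) := by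
  rw [Fintype.sum_prod_type]
  have h := Fin.sum_univ_eq_sum_range (fun j : ℕ => ∑ c, F (((j : ℕ) : Fin (N + 1)), c)) (N + 1)
  have h2 : ∀ j : Fin (N + 1), (((j : ℕ) : ℕ) : Fin (N + 1)) = j := fun j => Fin.cast_val_eq_self j
  calc ∑ j : Fin (N + 1), ∑ c, F (j, c)
      = ∑ j : Fin (N + 1), ∑ c, F ((((j : ℕ) : ℕ) : Fin (N + 1)), c) := by
        refine Finset.sum_congr rfl fun j _ => ?_; rw [h2 j]
    _ = ∑ j ∈ Finset.range (N + 1), ∑ c, F (((j : ℕ) : Fin (N + 1)), c) := h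
    _ = ∑ i ∈ Finset.range k, ∑ c, F ((((i + 1 : ℕ)) : Fin (N + 1)), c) := by
        apply band_sum hk
        · refine Finset.sum_eq_zero fun c _ => h0 _ c ?_
          simp
        · intro j hj hjN
          refine Finset.sum_eq_zero fun c _ => h0 _ c ?_
          rw [Fin.val_cast_of_lt (by omega)]
          omega

lemma expand_constraint {n m q : ℕ} (N : ℕ) (A : ℕ → Matrix (Fin n) (Fin n) ℝ)
    (B : ℕ → Matrix (Fin n) (Fin m) ℝ) (G : ℕ → Matrix (Fin q) (Fin n) ℝ)
    (u : ℕ → Fin m → ℝ) (d : ℕ → Fin n → ℝ) (x : Fin n → ℝ)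
    {k : ℕ} (hk : k ≤ N) (ρ : Fin q) :
    (G k).mulVec (trajOL A B u d x k) ρ
      = (G k).mulVec ((mprod A 0 k).mulVec x) ρ
        + (G k).mulVec (∑ i ∈ Finset.range k, (mprod A (i + 1) k * B i).mulVec (u i)) ρ
        + ∑ i ∈ Finset.range k, ∑ c,
            Eol N A G ((⟨k, by omega⟩ : Fin (N + 1)), ρ) (((i + 1 : ℕ) : Fin (N + 1)), c)
              * d i c := by
  rw [trajOL_eq, Matrix.mulVec_add, Matrix.mulVec_add]
  simp only [Pi.add_apply]
  congr 1
  rw [mulVec_sum'_s13]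
  rw [Finset.sum_apply]
  refine Finset.sum_congr rfl fun i hi => ?_
  have hik : i < k := Finset.mem_range.mp hi
  rw [Matrix.mulVec_mulVec]
  simp only [Matrix.mulVec, dotProduct]
  refine Finset.sum_congr rfl fun c _ => ?_
  congr 1
  rw [Eol_apply]
  rw [Fin.val_cast_of_lt (by omega : i + 1 < N + 1)]
  simp only [Fin.val_mk]
  rw [if_pos ⟨by omega, by omega⟩]

end Helpers2

section Helpers3

open Fin.NatCast

lemma mul_AbM {N n : ℕ} {ι : Type*}
    (P : Matrix ι ((Fin (N + 1) × Fin n) ⊕ (Fin (N + 1) × Fin n)) ℝ)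
    (r : ι) (c : Fin (N + 1) × Fin n) :
    (P * AbM N n) r c = P r (Sum.inl c) - P r (Sum.inr c) := by
  rw [Matrix.mul_apply, Fintype.sum_sum_type]
  simp [AbM, Matrix.one_apply, Matrix.neg_apply, mul_ite, mul_one, mul_zero,
    Finset.sum_ite_eq', sub_eq_add_neg]

lemma mulVec_BbV {N n : ℕ} {ι : Type*}
    (P : Matrix ι ((Fin (N + 1) × Fin n) ⊕ (Fin (N + 1) × Fin n)) ℝ) (r : ι) :
    P.mulVec (BbV N n) r = (∑ s, P r (Sum.inl s)) + ∑ s, P r (Sum.inr s) := by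
  simp [Matrix.mulVec, dotProduct, BbV, Fintype.sum_sum_type]

end Helpers3

open Fin.NatCast

/-- Effort metric under open-loop controllers, with disturbance bound `μ₀`: the infimum
of admissible input bounds `ε` in the robust formulation (over input sequences `u` with
`‖u(i)‖∞ ≤ ε`) equals the infimum in the Farkas-certified formulation (over normalized
inputs `ũ` with `‖ũ(i)‖∞ ≤ 1`, applied inputs `u(i) = ε ũ(i)`). -/
theorem effort_openLoop {n m q N : ℕ}
    (A : ℕ → Matrix (Fin n) (Fin n) ℝ) (B : ℕ → Matrix (Fin n) (Fin m) ℝ)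
    (G : ℕ → Matrix (Fin q) (Fin n) ℝ) (H : ℕ → Fin q → ℝ)
    (x : Fin n → ℝ) (μ₀ : ℝ) (hμ₀ : 0 ≤ μ₀) :
    sInf {ε : ℝ | 0 ≤ ε ∧ ∃ u : ℕ → Fin m → ℝ,
        (∀ i, i < N → ‖u i‖ ≤ ε) ∧
        ∀ d : ℕ → Fin n → ℝ, (∀ i, i < N → ‖d i‖ ≤ μ₀) →
          ∀ k, k ≤ N → (G k).mulVec (trajOL A B u d x k) ≤ H k} =
    sInf {ε : ℝ | 0 ≤ ε ∧ ∃ (ut : ℕ → Fin m → ℝ)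
        (P : Matrix (Fin (N + 1) × Fin q)
          ((Fin (N + 1) × Fin n) ⊕ (Fin (N + 1) × Fin n)) ℝ),
        (∀ i, i < N → ‖ut i‖ ≤ 1) ∧
        (∀ i j, 0 ≤ P i j) ∧
        P * AbM N n = μ₀ • Eol N A G ∧
        P.mulVec (BbV N n) ≤ Fol N A B G H x ut ε} := by
  congr 1
  ext ε
  simp only [Set.mem_setOf_eq]
  constructor
  · -- robust feasible → certificate
    rintro ⟨hε, u, hu, hrob⟩
    refine ⟨hε, ?_⟩
    set ut : ℕ → Fin m → ℝ := fun i => if ε = 0 then 0 else ε⁻¹ • u i with hut_def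
    have hscale : ∀ i, i < N → ε • ut i = u i := by
      intro i hi
      by_cases h0 : ε = 0
      · have h1 : ‖u i‖ ≤ 0 := h0 ▸ hu i hi
        have hu0 : u i = 0 :=
          norm_eq_zero.mp (le_antisymm h1 (norm_nonneg _))
        simp [hut_def, h0, hu0]
      · simp [hut_def, h0, smul_smul, mul_inv_cancel₀ h0]
    have hutn : ∀ i, i < N → ‖ut i‖ ≤ 1 := by
      intro i hi
      by_cases h0 : ε = 0
      · simp [hut_def, h0]
      · have hεpos : 0 < ε := lt_of_le_of_ne hε (Ne.symm h0)
        simp only [hut_def, if_neg h0]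
        rw [norm_smul, Real.norm_eq_abs, abs_of_nonneg (by positivity)]
        calc ε⁻¹ * ‖u i‖ ≤ ε⁻¹ * ε :=
              mul_le_mul_of_nonneg_left (hu i hi) (by positivity)
          _ = 1 := inv_mul_cancel₀ h0
    refine ⟨ut, Matrix.of fun r s => μ₀ *
        (Sum.elim (fun j => max (Eol N A G r j) 0)
          (fun j => max (-(Eol N A G r j)) 0) s), hutn, ?_, ?_, ?_⟩
    · rintro r (s | s) <;> exact mul_nonneg hμ₀ (le_max_right _ _)
    · ext r c
      rw [mul_AbM]
      simp only [Matrix.of_apply, Sum.elim_inl, Sum.elim_inr, Matrix.smul_apply,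
        smul_eq_mul]
      rw [← mul_sub, max_sub_max]
    · rw [Pi.le_def]
      rintro ⟨kf, ρ⟩
      rw [mulVec_BbV]
      simp only [Matrix.of_apply, Sum.elim_inl, Sum.elim_inr]
      have hk : (kf : ℕ) ≤ N := by omega
      -- adversarial disturbance
      set d : ℕ → Fin n → ℝ := fun i c =>
        if i < N then
          μ₀ * (if 0 ≤ Eol N A G (kf, ρ) (((i + 1 : ℕ) : Fin (N + 1)), c) then 1 else -1)
        else 0 with hd_def
      have hd : ∀ i, i < N → ‖d i‖ ≤ μ₀ := by
        intro i hi
        rw [pi_norm_le_iff_of_nonneg hμ₀]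
        intro c
        simp only [hd_def, if_pos hi, Real.norm_eq_abs, abs_mul, abs_of_nonneg hμ₀]
        split_ifs <;> simp
      have hc := hrob d hd (kf : ℕ) hk
      rw [Pi.le_def] at hc
      have hcρ := hc ρ
      rw [expand_constraint N A B G u d x hk ρ] at hcρ
      simp only [Fin.eta] at hcρ
      have hsum : ∑ i ∈ Finset.range (kf : ℕ), ∑ c,
            Eol N A G (kf, ρ) (((i + 1 : ℕ) : Fin (N + 1)), c) * d i c
          = μ₀ * ∑ jc : Fin (N + 1) × Fin n, |Eol N A G (kf, ρ) jc| := by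
        rw [pair_sum hk (fun jc => |Eol N A G (kf, ρ) jc|) (fun j c hb => by
          beta_reduce; rw [Eol_apply, if_neg hb, abs_zero])]
        rw [Finset.mul_sum]
        refine Finset.sum_congr rfl fun i hi => ?_
        rw [Finset.mul_sum]
        refine Finset.sum_congr rfl fun c _ => ?_
        have hiN : i < N := lt_of_lt_of_le (Finset.mem_range.mp hi) hk
        simp only [hd_def, if_pos hiN]
        by_cases h : 0 ≤ Eol N A G (kf, ρ) (((i + 1 : ℕ) : Fin (N + 1)), c)
        · rw [if_pos h, abs_of_nonneg h]; ring
        · rw [if_neg h, abs_of_neg (lt_of_not_ge h)]; ring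
      have habs : (∑ s : Fin (N + 1) × Fin n, μ₀ * max (Eol N A G (kf, ρ) s) 0)
            + ∑ s : Fin (N + 1) × Fin n, μ₀ * max (-(Eol N A G (kf, ρ) s)) 0
          = μ₀ * ∑ jc : Fin (N + 1) × Fin n, |Eol N A G (kf, ρ) jc| := by
        rw [← Finset.sum_add_distrib, Finset.mul_sum]
        refine Finset.sum_congr rfl fun s _ => ?_
        rw [← mul_add, max_add_max]
      rw [habs]
      -- the ε-scaled input term
      have hterm : ε * (G (kf : ℕ)).mulVec
            (∑ i ∈ Finset.range (kf : ℕ), (mprod A (i + 1) (kf : ℕ) * B i).mulVec (ut i)) ρ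
          = (G (kf : ℕ)).mulVec
            (∑ i ∈ Finset.range (kf : ℕ), (mprod A (i + 1) (kf : ℕ) * B i).mulVec (u i)) ρ := by
        have h1 : (∑ i ∈ Finset.range (kf : ℕ), (mprod A (i + 1) (kf : ℕ) * B i).mulVec (u i))
            = ε • ∑ i ∈ Finset.range (kf : ℕ), (mprod A (i + 1) (kf : ℕ) * B i).mulVec (ut i) := by
          rw [Finset.smul_sum]
          refine Finset.sum_congr rfl fun i hi => ?_
          rw [← Matrix.mulVec_smul, hscale i (lt_of_lt_of_le (Finset.mem_range.mp hi) hk)]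
        rw [h1, Matrix.mulVec_smul, Pi.smul_apply, smul_eq_mul]
      simp only [Fol]
      rw [← hsum]
      linarith [hcρ, hterm]
  · -- certificate → robust feasible
    rintro ⟨hε, ut, P, hutn, hP0, hPA, hPB⟩
    refine ⟨hε, fun i => ε • ut i, fun i hi => ?_, ?_⟩
    · rw [norm_smul, Real.norm_eq_abs, abs_of_nonneg hε]
      calc ε * ‖ut i‖ ≤ ε * 1 := mul_le_mul_of_nonneg_left (hutn i hi) hε
        _ = ε := mul_one ε
    · intro d hd k hk
      rw [Pi.le_def]
      intro ρ
      obtain ⟨kf, rfl⟩ : ∃ kf : Fin (N + 1), k = (kf : ℕ) := ⟨⟨k, by omega⟩, rfl⟩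
      rw [expand_constraint N A B G _ d x hk ρ]
      simp only [Fin.eta]
      have hPBr := hPB (kf, ρ)
      rw [mulVec_BbV] at hPBr
      simp only [Fol] at hPBr
      have hPdiff : ∀ s, P (kf, ρ) (Sum.inl s) - P (kf, ρ) (Sum.inr s)
          = μ₀ * Eol N A G (kf, ρ) s := by
        intro s
        have h := congrFun (congrFun hPA (kf, ρ)) s
        rw [mul_AbM] at h
        rw [h, Matrix.smul_apply, smul_eq_mul]
      have key : ∑ i ∈ Finset.range (kf : ℕ), ∑ c,
            Eol N A G (kf, ρ) (((i + 1 : ℕ) : Fin (N + 1)), c) * d i c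
          ≤ (∑ s, P (kf, ρ) (Sum.inl s)) + ∑ s, P (kf, ρ) (Sum.inr s) := by
        set dv : Fin (N + 1) × Fin n → ℝ := fun jc =>
          if (jc.1 : ℕ) = 0 then 0 else d ((jc.1 : ℕ) - 1) jc.2 with hdv_def
        have hdvb : ∀ jc, |dv jc| ≤ μ₀ := by
          intro jc
          by_cases h : (jc.1 : ℕ) = 0
          · simp only [hdv_def, if_pos h, abs_zero]; exact hμ₀
          · simp only [hdv_def, if_neg h]
            have h2 : (jc.1 : ℕ) - 1 < N := by have := jc.1.isLt; omega
            calc |d ((jc.1 : ℕ) - 1) jc.2| = ‖d ((jc.1 : ℕ) - 1) jc.2‖ :=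
                  (Real.norm_eq_abs _).symm
              _ ≤ ‖d ((jc.1 : ℕ) - 1)‖ := norm_le_pi_norm _ _
              _ ≤ μ₀ := hd _ h2
        have hLHS : ∑ i ∈ Finset.range (kf : ℕ), ∑ c,
              Eol N A G (kf, ρ) (((i + 1 : ℕ) : Fin (N + 1)), c) * d i c
            = ∑ jc : Fin (N + 1) × Fin n, Eol N A G (kf, ρ) jc * dv jc := by
          rw [pair_sum hk (fun jc => Eol N A G (kf, ρ) jc * dv jc) (fun j c hb => by
            beta_reduce; rw [Eol_apply, if_neg hb, zero_mul])]
          refine Finset.sum_congr rfl fun i hi => Finset.sum_congr rfl fun c _ => ?_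
          have hi1 : i + 1 < N + 1 := by
            have := Finset.mem_range.mp hi; omega
          simp only [hdv_def]
          rw [Fin.val_cast_of_lt hi1]
          norm_num
        rw [hLHS]
        rcases eq_or_lt_of_le hμ₀ with hμz | hμpos
        · have hdv0 : ∀ jc, dv jc = 0 := fun jc =>
            abs_eq_zero.mp (le_antisymm (hμz ▸ hdvb jc) (abs_nonneg _))
          rw [Finset.sum_eq_zero fun jc _ => by rw [hdv0, mul_zero]]
          apply add_nonneg <;> exact Finset.sum_nonneg fun s _ => hP0 _ _
        · rw [← mul_le_mul_iff_right₀ hμpos]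
          calc μ₀ * ∑ jc : Fin (N + 1) × Fin n, Eol N A G (kf, ρ) jc * dv jc
              = ∑ jc : Fin (N + 1) × Fin n,
                  (P (kf, ρ) (Sum.inl jc) - P (kf, ρ) (Sum.inr jc)) * dv jc := by
                rw [Finset.mul_sum]
                exact Finset.sum_congr rfl fun jc _ => by rw [hPdiff]; ring
            _ ≤ ∑ jc : Fin (N + 1) × Fin n,
                  (P (kf, ρ) (Sum.inl jc) + P (kf, ρ) (Sum.inr jc)) * μ₀ := by
                refine Finset.sum_le_sum fun jc _ => ?_
                have h1 := hP0 (kf, ρ) (Sum.inl jc)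
                have h2 := hP0 (kf, ρ) (Sum.inr jc)
                have h3 := abs_le.mp (hdvb jc)
                nlinarith [h3.1, h3.2]
            _ = μ₀ * ((∑ s, P (kf, ρ) (Sum.inl s)) + ∑ s, P (kf, ρ) (Sum.inr s)) := by
                rw [← Finset.sum_add_distrib]
                rw [Finset.mul_sum]
                exact Finset.sum_congr rfl fun jc _ => by ring
      have hterm : (G (kf : ℕ)).mulVec
            (∑ i ∈ Finset.range (kf : ℕ), (mprod A (i + 1) (kf : ℕ) * B i).mulVec (ε • ut i)) ρ
          = ε * (G (kf : ℕ)).mulVec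
            (∑ i ∈ Finset.range (kf : ℕ), (mprod A (i + 1) (kf : ℕ) * B i).mulVec (ut i)) ρ := by
        have h1 : (∑ i ∈ Finset.range (kf : ℕ), (mprod A (i + 1) (kf : ℕ) * B i).mulVec (ε • ut i))
            = ε • ∑ i ∈ Finset.range (kf : ℕ), (mprod A (i + 1) (kf : ℕ) * B i).mulVec (ut i) := by
          rw [Finset.smul_sum]
          exact Finset.sum_congr rfl fun i hi => Matrix.mulVec_smul _ _ _
        rw [h1, Matrix.mulVec_smul, Pi.smul_apply, smul_eq_mul]
      linarith [key, hPBr, hterm]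
end
end
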